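/- If G is a graph that is the intersection graph of a family of directed paths in a rooted directed tree, then G is chordal (every cycle of length at least 4 has a chord). -/

import Mathlib

/-- A set `s` of vertices induces a directed path for the arc relation `A` if its
elements can be listed without repetition as `v₀, v₁, …, v_k` such that consecutive
elements are joined by an arc and every arc between elements of `s` joins
consecutive elements of the list. -/
def IsDirPathOn {W : Type*} (A : W → W → Prop) (s : Set W) : Prop :=
  ∃ l : List W, l.Nodup ∧ (∀ x, x ∈ l ↔ x ∈ s) ∧ l.Chain' A ∧
    ∀ x ∈ s, ∀ y ∈ s, A x y → ∃ n, l[n]? = some x ∧ l[n + 1]? = some y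

open SimpleGraph Walk

namespace Stmt18Aux

variable {W : Type*} {T : SimpleGraph W} {r x y z a b : W}

lemma mem_split_dist {p : T.Walk a b} (hy : y ∈ p.support) :
    T.dist a y + T.dist y b ≤ p.length := by
  classical
  calc T.dist a y + T.dist y b
      ≤ (p.takeUntil y hy).length + (p.dropUntil y hy).length :=
        Nat.add_le_add (dist_le _) (dist_le _)
    _ = p.length := by rw [← length_append, take_spec]

lemma not_mem_sp {p : T.Walk r y} (hp : p.length = T.dist r y)
    (hlt : T.dist r y < T.dist r x) : x ∉ p.support := by
  intro hx
  have h := mem_split_dist (y := x) hx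
  have h2 : T.dist r x ≤ T.dist r x + T.dist x y := Nat.le_add_right _ _
  omega

lemma isPath_concat' {p : T.Walk a b} (h : T.Adj b x) (hp : p.IsPath)
    (hx : x ∉ p.support) : (p.concat h).IsPath := by
  rw [isPath_def, support_concat]
  simp only [List.nodup_append, List.nodup_cons, List.not_mem_nil, not_false_iff,
    List.nodup_nil, and_true, List.disjoint_singleton]
  exact ⟨hp.support_nodup, ⟨trivial, by intro a ha b hb hab; rw [List.mem_singleton] at hb; subst hb hab; exact hx ha⟩⟩

lemma adj_dist_ne (hT : T.IsTree) (h : T.Adj x y) : T.dist r x ≠ T.dist r y := by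
  intro heq
  have hconn := hT.isConnected
  obtain ⟨p, hp, hpl⟩ := hconn.exists_path_of_dist r x
  have hy : y ∉ p.support := by
    intro hy'
    have h1 := mem_split_dist (y := y) hy'
    have h2 : 0 < T.dist y x := hconn.pos_dist_of_ne h.symm.ne
    omega
  obtain ⟨q, hq, hql⟩ := hconn.exists_path_of_dist r y
  have heq2 := (hT.existsUnique_path r y).unique (isPath_concat' h hp hy) hq
  have hlen := congrArg Walk.length heq2
  rw [length_concat] at hlen
  omega

lemma parent_unique (hT : T.IsTree) (hxy : T.Adj x y) (hxz : T.Adj x z)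
    (hdy : T.dist r y + 1 = T.dist r x) (hdz : T.dist r z + 1 = T.dist r x) : y = z := by
  have hconn := hT.isConnected
  obtain ⟨p, hp, hpl⟩ := hconn.exists_path_of_dist r y
  obtain ⟨q, hq, hql⟩ := hconn.exists_path_of_dist r z
  have hxp : x ∉ p.support := not_mem_sp hpl (by omega)
  have hxq : x ∉ q.support := not_mem_sp hql (by omega)
  have h1 : (p.concat hxy.symm).IsPath := isPath_concat' _ hp hxp
  have h2 : (q.concat hxz.symm).IsPath := isPath_concat' _ hq hxq
  have heq := (hT.existsUnique_path r x).unique h1 h2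
  have he : s(y, x) ∈ (q.concat hxz.symm).edges := by
    rw [← heq, edges_concat, List.concat_eq_append]
    simp
  rw [edges_concat, List.concat_eq_append, List.mem_append, List.mem_singleton] at he
  rcases he with he | he
  · exact absurd (q.snd_mem_support_of_mem_edges he) hxq
  · rcases Sym2.eq_iff.1 he with ⟨h3, _⟩ | ⟨h3, h4⟩
    · exact h3
    · exact absurd h3.symm hxy.ne

open Classical in
noncomputable def par (T : SimpleGraph W) (r : W) (x : W) : W :=
  if h : ∃ y, T.Adj x y ∧ T.dist r y + 1 = T.dist r x then h.choose else x

lemma par_eq (hT : T.IsTree) (hxy : T.Adj x y) (hd : T.dist r y + 1 = T.dist r x) :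
    par T r x = y := by
  have hex : ∃ z, T.Adj x z ∧ T.dist r z + 1 = T.dist r x := ⟨y, hxy, hd⟩
  classical
  rw [par, dif_pos hex]
  exact parent_unique hT hex.choose_spec.1 hxy hex.choose_spec.2 hd

lemma desc (hT : T.IsTree) : ∀ {q t : W} (p : T.Walk q t), p.IsPath →
    (∀ x ∈ p.support, T.dist r t ≤ T.dist r x) →
    p.length + T.dist r t = T.dist r q ∧
      ∀ j ≤ p.length, p.getVert j = (par T r)^[j] q := by
  intro q t p
  induction p with
  | nil =>
    intro _ _
    refine ⟨by simp, fun j hj => ?_⟩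
    have hj0 : j = 0 := by simpa using hj
    subst hj0
    simp
  | @cons q y t hadj p ih =>
    intro hp hmin
    have hp' : p.IsPath := hp.of_cons
    have hqns : q ∉ p.support := ((cons_isPath_iff _ _).1 hp).2
    have hmin' : ∀ x ∈ p.support, T.dist r t ≤ T.dist r x := fun x hx =>
      hmin x (by simp [support_cons, hx])
    obtain ⟨ihlen, ihgv⟩ := ih hp' hmin'
    have hne : T.dist r q ≠ T.dist r y := adj_dist_ne hT hadj
    have h1 : T.dist r q ≤ T.dist r y + 1 := by
      have ht := hT.isConnected.dist_triangle (u := r) (v := y) (w := q)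
      have h2 : T.dist y q = 1 := dist_eq_one_iff_adj.2 hadj.symm
      omega
    have h2 : T.dist r y ≤ T.dist r q + 1 := by
      have ht := hT.isConnected.dist_triangle (u := r) (v := q) (w := y)
      have h2 : T.dist q y = 1 := dist_eq_one_iff_adj.2 hadj
      omega
    have hdown : T.dist r y + 1 = T.dist r q := by
      by_contra hup
      have hpar : par T r y = q := par_eq hT hadj.symm (by omega)
      rcases Nat.eq_zero_or_pos p.length with h0 | h0
      · have hyt : y = t := by
          have hgl := p.getVert_length
          rw [h0, getVert_zero] at hgl
          exact hgl
        have ht : T.dist r t ≤ T.dist r q := hmin q (by simp [support_cons])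
        rw [← hyt] at ht
        omega
      · have hq1 : p.getVert 1 = q := by
          rw [ihgv 1 h0, Function.iterate_one, hpar]
        exact hqns (mem_support_iff_exists_getVert.2 ⟨1, hq1, h0⟩)
    have hparq : par T r q = y := par_eq hT hadj hdown
    refine ⟨by rw [length_cons]; omega, fun j hj => ?_⟩
    cases j with
    | zero => simp
    | succ j =>
      rw [getVert_cons_succ, ihgv j (by rw [length_cons] at hj; omega),
        Function.iterate_succ_apply, hparq]

lemma reach_top (hT : T.IsTree) {S : Set W}
    (hconnS : ∀ a ∈ S, ∀ b ∈ S, ∃ p : T.Walk a b, ∀ x ∈ p.support, x ∈ S)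
    {t : W} (ht : t ∈ S) (htmin : ∀ x ∈ S, T.dist r t ≤ T.dist r x)
    {q : W} (hq : q ∈ S) :
    (par T r)^[T.dist r q - T.dist r t] q = t ∧
      ∀ j ≤ T.dist r q - T.dist r t, (par T r)^[j] q ∈ S := by
  classical
  obtain ⟨p0, hp0⟩ := hconnS q hq t ht
  have hsub : ∀ x ∈ p0.bypass.support, x ∈ S := fun x hx =>
    hp0 x (support_bypass_subset _ hx)
  obtain ⟨hlen, hgv⟩ := desc hT p0.bypass p0.bypass_isPath
    (fun x hx => htmin x (hsub x hx))
  have hql : p0.bypass.length = T.dist r q - T.dist r t := by omega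
  constructor
  · rw [← hql, ← hgv p0.bypass.length le_rfl, getVert_length]
  · intro j hj
    rw [← hgv j (by omega)]
    exact hsub _ (mem_support_iff_exists_getVert.2 ⟨j, rfl, by omega⟩)


lemma nodup_getVert_inj {p : T.Walk a b} (hp : p.support.Nodup) {i j : ℕ}
    (hi : i ≤ p.length) (hj : j ≤ p.length) (h : p.getVert i = p.getVert j) : i = j := by
  induction p generalizing i j with
  | nil => simp only [length_nil] at hi hj; omega
  | @cons u v w hadj p ih =>
    rw [support_cons, List.nodup_cons] at hp
    rw [length_cons] at hi hj
    cases i with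
    | zero =>
      cases j with
      | zero => rfl
      | succ j =>
        exfalso
        apply hp.1
        rw [getVert_zero, getVert_cons_succ] at h
        exact mem_support_iff_exists_getVert.2 ⟨j, h.symm, by omega⟩
    | succ i =>
      cases j with
      | zero =>
        exfalso
        apply hp.1
        rw [getVert_zero, getVert_cons_succ] at h
        exact mem_support_iff_exists_getVert.2 ⟨i, h, by omega⟩
      | succ j =>
        rw [getVert_cons_succ, getVert_cons_succ] at h
        have := ih hp.2 (by omega) (by omega) h
        omega

lemma cycle_getVert_inj {c : T.Walk a a} (hc : c.IsCycle) {i j : ℕ}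
    (hi1 : 1 ≤ i) (hi2 : i ≤ c.length) (hj1 : 1 ≤ j) (hj2 : j ≤ c.length)
    (h : c.getVert i = c.getVert j) : i = j := by
  obtain ⟨b, hadj, q, hq⟩ := not_nil_iff.1 hc.not_nil
  subst hq
  have hqp : q.IsPath := ((cons_isCycle_iff _ _).1 hc).1
  rw [length_cons] at hi2 hj2
  cases i with
  | zero => omega
  | succ i =>
    cases j with
    | zero => omega
    | succ j =>
      rw [getVert_cons_succ, getVert_cons_succ] at h
      have := nodup_getVert_inj hqp.support_nodup (by omega) (by omega) h
      omega

lemma edge_getVert {p : T.Walk a b} {e : Sym2 W} (he : e ∈ p.edges) :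
    ∃ i < p.length, e = s(p.getVert i, p.getVert (i + 1)) := by
  induction p with
  | nil => simp at he
  | @cons u v w hadj p ih =>
    rw [edges_cons, List.mem_cons] at he
    rcases he with rfl | he
    · refine ⟨0, by rw [length_cons]; omega, ?_⟩
      rw [getVert_zero]
      have : (cons hadj p).getVert 1 = v := by rw [getVert_cons_succ, getVert_zero]
      rw [this]
    · obtain ⟨i, hi, rfl⟩ := ih he
      exact ⟨i + 1, by rw [length_cons]; omega, by rw [getVert_cons_succ, getVert_cons_succ]⟩

lemma length_rotate' [DecidableEq W] {c : T.Walk a a} (hx : b ∈ c.support) :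
    (c.rotate b hx).length = c.length := by
  have h := congrArg Walk.length (take_spec c hx)
  rw [length_append] at h
  have h2 : (c.rotate b hx).length
      = (c.dropUntil b hx).length + (c.takeUntil b hx).length := by
    rw [show c.rotate b hx = (c.dropUntil b hx).append (c.takeUntil b hx) from rfl,
      length_append]
  omega

lemma chain_walk (A : W → W → Prop) : ∀ (x : W) (l : List W), (x :: l).Nodup →
    (x :: l).Chain' A → ∀ a ∈ x :: l,
    ∃ p : (SimpleGraph.fromRel A).Walk x a, ∀ y ∈ p.support, y ∈ x :: l := by
  intro x l
  induction l generalizing x with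
  | nil =>
    intro _ _ a ha
    rw [List.mem_singleton] at ha
    subst ha
    exact ⟨Walk.nil, by simp⟩
  | cons b l ih =>
    intro hnd hch a ha
    rcases List.mem_cons.1 ha with rfl | ha'
    · exact ⟨Walk.nil, by simp⟩
    · have hxb : x ≠ b := by
        intro hh
        exact (List.nodup_cons.1 hnd).1 (hh ▸ List.mem_cons_self)
      have hab : (SimpleGraph.fromRel A).Adj x b :=
        (SimpleGraph.fromRel_adj A x b).2 ⟨hxb, Or.inl (List.isChain_cons_cons.1 hch).1⟩
      obtain ⟨p, hp⟩ := ih b (List.nodup_cons.1 hnd).2 (List.isChain_cons_cons.1 hch).2 a ha'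
      refine ⟨Walk.cons hab p, fun y hy => ?_⟩
      rw [support_cons, List.mem_cons] at hy
      rcases hy with rfl | hy
      · exact List.mem_cons_self
      · exact List.mem_cons_of_mem _ (hp y hy)

lemma closed_mem_support_tail {c : T.Walk a a} (hc : ¬ c.Nil) :
    b ∈ c.support ↔ b ∈ c.support.tail := by
  obtain ⟨u, hadj, q, hq⟩ := not_nil_iff.1 hc
  subst hq
  rw [support_cons]
  simp only [List.tail_cons, List.mem_cons]
  constructor
  · rintro (rfl | h)
    · exact q.end_mem_support
    · exact h
  · exact Or.inr

lemma dirpath_conn {A : W → W → Prop} {s : Set W} (h : IsDirPathOn A s) :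
    ∀ a ∈ s, ∀ b ∈ s, ∃ p : (SimpleGraph.fromRel A).Walk a b,
      ∀ x ∈ p.support, x ∈ s := by
  obtain ⟨l, hnd, hmem, hch, -⟩ := h
  intro a ha b hb
  have hal : a ∈ l := (hmem a).2 ha
  have hbl : b ∈ l := (hmem b).2 hb
  cases l with
  | nil => simp at hal
  | cons x l0 =>
    obtain ⟨p1, hp1⟩ := chain_walk A x l0 hnd hch a hal
    obtain ⟨p2, hp2⟩ := chain_walk A x l0 hnd hch b hbl
    refine ⟨p1.reverse.append p2, fun y hy => ?_⟩
    rcases (mem_support_append_iff _ _).1 hy with hy | hy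
    · exact (hmem y).1 (hp1 y (by rwa [support_reverse, List.mem_reverse] at hy))
    · exact (hmem y).1 (hp2 y hy)

end Stmt18Aux

/-- If `G` is the intersection graph of a family of directed paths in a rooted
directed tree (an orientation of a finite tree with exactly one vertex of
in-degree zero), then `G` is chordal: every cycle of length at least 4 has a
chord, i.e. an edge of `G` joining two vertices of the cycle that is not an edge
of the cycle. -/
theorem stmt_18 {V : Type*} (G : SimpleGraph V)
    (hRDV : ∃ (W : Type) (_ : Finite W) (A : W → W → Prop) (path : V → Set W),
      (SimpleGraph.fromRel A).IsTree ∧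
      (∃! w : W, {u : W | A u w} = ∅) ∧
      (∀ v : V, IsDirPathOn A (path v)) ∧
      (∀ u v : V, u ≠ v → (G.Adj u v ↔ (path u ∩ path v).Nonempty))) :
    ∀ (v : V) (c : G.Walk v v), c.IsCycle → 4 ≤ c.length →
      ∃ x y : V, x ∈ c.support ∧ y ∈ c.support ∧ G.Adj x y ∧ s(x, y) ∉ c.edges := by
  classical
  obtain ⟨W, hfin, A, path, hT, -, hdir, hGadj⟩ := hRDV
  intro v c hc hlen
  have hconn := hT.isConnected
  obtain ⟨r⟩ := hconn.nonempty
  have htop : ∀ a : V, (path a).Nonempty → ∃ t, t ∈ path a ∧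
      ∀ x ∈ path a, (SimpleGraph.fromRel A).dist r t ≤ (SimpleGraph.fromRel A).dist r x := by
    intro a ha
    obtain ⟨t, ht, hmin⟩ := Set.exists_min_image (path a)
      (fun w => (SimpleGraph.fromRel A).dist r w) (Set.toFinite _) ha
    exact ⟨t, ht, hmin⟩
  haveI : Inhabited W := ⟨r⟩
  choose! top htopmem htopmin using htop
  have hmem2 : ∀ a b : V, ∀ q : W, q ∈ path a → q ∈ path b →
      (SimpleGraph.fromRel A).dist r (top a) ≤ (SimpleGraph.fromRel A).dist r (top b) →
      top b ∈ path a := by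
    intro a b q hqa hqb hab
    have hna : (path a).Nonempty := ⟨q, hqa⟩
    have hnb : (path b).Nonempty := ⟨q, hqb⟩
    obtain ⟨hb1, -⟩ := Stmt18Aux.reach_top hT (Stmt18Aux.dirpath_conn (hdir b))
      (htopmem b hnb) (htopmin b hnb) hqb
    obtain ⟨-, ha2⟩ := Stmt18Aux.reach_top hT (Stmt18Aux.dirpath_conn (hdir a))
      (htopmem a hna) (htopmin a hna) hqa
    rw [← hb1]
    apply ha2
    have h1 := htopmin a hna q hqa
    have h2 := htopmin b hnb q hqb
    omega
  obtain ⟨x, hxs, hxmax⟩ := Set.exists_max_image {a : V | a ∈ c.support}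
    (fun a => (SimpleGraph.fromRel A).dist r (top a)) (c.support.finite_toSet)
    ⟨v, c.start_mem_support⟩
  set n := c.length with hn
  have hn4 : 4 ≤ n := hlen
  set c' := c.rotate x hxs with hc'
  have hc'cyc : c'.IsCycle := hc.rotate hxs
  have hc'len : c'.length = n := Stmt18Aux.length_rotate' hxs
  have hsupiff : ∀ y : V, (y ∈ c'.support ↔ y ∈ c.support) := by
    intro y
    rw [Stmt18Aux.closed_mem_support_tail hc'cyc.not_nil,
      Stmt18Aux.closed_mem_support_tail hc.not_nil]
    exact (support_rotate c x hxs).mem_iff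
  set u := c'.getVert 1 with hu
  set w := c'.getVert (n - 1) with hw
  have h0x : c'.getVert 0 = x := getVert_zero _
  have hnx : c'.getVert n = x := by rw [← hc'len]; exact getVert_length _
  have hadjxu : G.Adj x u := by
    have h := c'.adj_getVert_succ (i := 0) (by rw [hc'len]; omega)
    rwa [h0x] at h
  have hadjwx : G.Adj w x := by
    have h := c'.adj_getVert_succ (i := n - 1) (by rw [hc'len]; omega)
    rwa [show n - 1 + 1 = n by omega, hnx] at h
  have husup' : u ∈ c'.support :=
    mem_support_iff_exists_getVert.2 ⟨1, rfl, by rw [hc'len]; omega⟩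
  have hwsup' : w ∈ c'.support :=
    mem_support_iff_exists_getVert.2 ⟨n - 1, rfl, by rw [hc'len]; omega⟩
  have husup : u ∈ c.support := (hsupiff u).1 husup'
  have hwsup : w ∈ c.support := (hsupiff w).1 hwsup'
  have hinj : ∀ i j, 1 ≤ i → i ≤ n → 1 ≤ j → j ≤ n →
      c'.getVert i = c'.getVert j → i = j := by
    intro i j h1 h2 h3 h4 h5
    exact Stmt18Aux.cycle_getVert_inj hc'cyc h1 (by rw [hc'len]; exact h2) h3
      (by rw [hc'len]; exact h4) h5
  have hnuw : u ≠ w := by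
    intro h
    have := hinj 1 (n - 1) le_rfl (by omega) (by omega) (by omega) h
    omega
  obtain ⟨q1, hq1x, hq1u⟩ := (hGadj x u hadjxu.ne).1 hadjxu
  obtain ⟨q2, hq2w, hq2x⟩ := (hGadj w x hadjwx.ne).1 hadjwx
  have htu : top x ∈ path u := hmem2 u x q1 hq1u hq1x (hxmax u husup)
  have htw : top x ∈ path w := hmem2 w x q2 hq2w hq2x (hxmax w hwsup)
  have hadjuw : G.Adj u w := (hGadj u w hnuw).2 ⟨top x, htu, htw⟩
  refine ⟨u, w, husup, hwsup, hadjuw, fun hedge => ?_⟩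
  have hedge' : s(u, w) ∈ c'.edges := (rotate_edges c x hxs).mem_iff.2 hedge
  obtain ⟨i, hi, hie⟩ := Stmt18Aux.edge_getVert hedge'
  rw [hc'len] at hi
  rcases Sym2.eq_iff.1 hie with ⟨h1, h2⟩ | ⟨h1, h2⟩
  · by_cases hi0 : i = 0
    · subst hi0
      have heq : c'.getVert 1 = c'.getVert n := by
        rw [← hu, hnx]
        rw [h0x] at h1
        exact h1
      have := hinj 1 n le_rfl (by omega) (by omega) le_rfl heq
      omega
    · have hi1 : 1 = i := hinj 1 i le_rfl (by omega) (by omega) (by omega)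
        (by rw [← hu]; exact h1)
      have heq2 : c'.getVert (n - 1) = c'.getVert (i + 1) := by rw [← hw]; exact h2
      have := hinj (n - 1) (i + 1) (by omega) (by omega) (by omega) (by omega) heq2
      omega
  · have hi1 : 1 = i + 1 := hinj 1 (i + 1) le_rfl (by omega) (by omega) (by omega)
      (by rw [← hu]; exact h1)
    have hi0 : i = 0 := by omega
    subst hi0
    have heq : c'.getVert (n - 1) = c'.getVert n := by
      rw [← hw, hnx]
      rw [h0x] at h2
      exact h2
    have := hinj (n - 1) n (by omega) (by omega) (by omega) le_rfl heq
    omega
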